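/- Let G be an α-regular finite simple graph on a nonempty vertex set and let k be an integer with 1 ≤ k ≤ α. Then the girth of G is at least k+1 if and only if M_G(k) = k·α − (k−1). -/

import Mathlib

open SimpleGraph

/-- The number of edges of `G` incident to at least one vertex of `S`. -/
noncomputable def incidentEdgeCount {V : Type*} (G : SimpleGraph V) (S : Finset V) : ℕ :=
  {e ∈ G.edgeSet | ∃ v ∈ S, v ∈ e}.ncard

/-- `fileSize G k` is the minimum, over all `k`-element vertex sets `S`, of the number of
edges of `G` incident to at least one vertex of `S`. -/
noncomputable def fileSize {V : Type*} (G : SimpleGraph V) (k : ℕ) : ℕ :=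
  sInf { m | ∃ S : Finset V, S.card = k ∧ m = incidentEdgeCount G S }
open Finset

open scoped Classical

section Aux

variable {V : Type*} [Fintype V] (G : SimpleGraph V) [DecidableRel G.Adj]

/-- Edges with both endpoints in `S`. -/
noncomputable def eint (S : Finset V) : Finset (Sym2 V) :=
  @Finset.filter _ (fun e => ∀ x ∈ e, x ∈ S) (fun _ => Classical.propDecidable _) G.edgeFinset

/-- Edges with at least one endpoint in `S`. -/
noncomputable def einc (S : Finset V) : Finset (Sym2 V) :=
  @Finset.filter _ (fun e => ∃ x ∈ S, x ∈ e) (fun _ => Classical.propDecidable _) G.edgeFinset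

variable {G}

lemma mem_eint {S : Finset V} {e : Sym2 V} :
    e ∈ eint G S ↔ e ∈ G.edgeSet ∧ ∀ x ∈ e, x ∈ S := by
  simp [eint, Finset.mem_filter, mem_edgeFinset]

lemma mem_einc {S : Finset V} {e : Sym2 V} :
    e ∈ einc G S ↔ e ∈ G.edgeSet ∧ ∃ x ∈ S, x ∈ e := by
  simp [einc, Finset.mem_filter, mem_edgeFinset]

lemma incidentEdgeCount_eq (S : Finset V) :
    incidentEdgeCount G S = (einc G S).card := by
  have h : {e ∈ G.edgeSet | ∃ v ∈ S, v ∈ e} = ↑(einc G S) := by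
    ext e
    simp only [Set.mem_setOf_eq, Finset.mem_coe, mem_einc]
  rw [incidentEdgeCount, h, Set.ncard_coe_finset]

lemma per_edge (S : Finset V) {e : Sym2 V} (he : e ∈ G.edgeSet) :
    (∑ v ∈ S, if v ∈ e then 1 else 0)
      = ((if (∃ x ∈ S, x ∈ e) then 1 else 0) + (if (∀ x ∈ e, x ∈ S) then 1 else 0) : ℕ) := by
  classical
  induction e using Sym2.ind with
  | _ a b =>
    have hadj : G.Adj a b := he
    have hne : a ≠ b := hadj.ne
    rw [← Finset.card_filter]
    have : S.filter (fun v => v ∈ s(a, b)) = S.filter (fun v => v = a ∨ v = b) := by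
      apply Finset.filter_congr; intro v _; simp [Sym2.mem_iff]
    rw [this]
    have hfa : (∀ x ∈ s(a, b), x ∈ S) ↔ (a ∈ S ∧ b ∈ S) := by
      constructor
      · intro h; exact ⟨h a (by simp), h b (by simp)⟩
      · rintro ⟨h1, h2⟩ x hx; rw [Sym2.mem_iff] at hx; rcases hx with rfl | rfl <;> assumption
    have hex : (∃ x ∈ S, x ∈ s(a, b)) ↔ (a ∈ S ∨ b ∈ S) := by
      constructor
      · rintro ⟨x, hx, hm⟩; rw [Sym2.mem_iff] at hm; rcases hm with rfl | rfl
        · exact Or.inl hx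
        · exact Or.inr hx
      · rintro (h | h)
        · exact ⟨a, h, by simp⟩
        · exact ⟨b, h, by simp⟩
    by_cases ha : a ∈ S <;> by_cases hb : b ∈ S
    · have hset : S.filter (fun v => v = a ∨ v = b) = {a, b} := by
        ext x
        simp only [Finset.mem_filter, Finset.mem_insert, Finset.mem_singleton]
        aesop
      rw [hset, if_pos (hex.mpr (Or.inl ha)), if_pos (hfa.mpr ⟨ha, hb⟩),
        Finset.card_insert_of_notMem (by simp [hne]), Finset.card_singleton]
    · have hset : S.filter (fun v => v = a ∨ v = b) = {a} := by
        ext x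
        simp only [Finset.mem_filter, Finset.mem_singleton]
        aesop
      rw [hset, if_pos (hex.mpr (Or.inl ha)), if_neg (fun h => hb (hfa.mp h).2),
        Finset.card_singleton]
    · have hset : S.filter (fun v => v = a ∨ v = b) = {b} := by
        ext x
        simp only [Finset.mem_filter, Finset.mem_singleton]
        aesop
      rw [hset, if_pos (hex.mpr (Or.inr hb)), if_neg (fun h => ha (hfa.mp h).1),
        Finset.card_singleton]
    · have hset : S.filter (fun v => v = a ∨ v = b) = ∅ := by
        ext x
        simp only [Finset.mem_filter, Finset.notMem_empty, iff_false, not_and]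
        aesop
      rw [hset, if_neg (fun h => by rcases hex.mp h with h | h; exacts [ha h, hb h]),
        if_neg (fun h => ha (hfa.mp h).1), Finset.card_empty]

lemma count_key (S : Finset V) :
    (einc G S).card + (eint G S).card = ∑ v ∈ S, G.degree v := by
  classical
  have hdeg : ∀ v : V, G.degree v = (G.edgeFinset.filter (fun e => v ∈ e)).card := by
    intro v
    rw [← card_incidenceFinset_eq_degree, incidenceFinset_eq_filter]
  have h1 : ∑ v ∈ S, G.degree v
      = ∑ e ∈ G.edgeFinset, ∑ v ∈ S, if v ∈ e then 1 else 0 := by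
    rw [← Finset.sum_comm]
    simp_rw [hdeg, Finset.card_filter]
  rw [h1, Finset.sum_congr rfl (fun e heE => per_edge S (mem_edgeFinset.mp heE)),
    Finset.sum_add_distrib]
  congr 1
  · rw [← Finset.card_filter]
    apply Finset.card_bij (fun e _ => e) <;> simp [einc, Finset.mem_filter]
  · rw [← Finset.card_filter]
    apply Finset.card_bij (fun e _ => e) <;> simp [eint, Finset.mem_filter]

lemma key_count {α : ℕ} (hreg : G.IsRegularOfDegree α) (S : Finset V) :
    incidentEdgeCount G S + (eint G S).card = S.card * α := by
  rw [incidentEdgeCount_eq, count_key]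
  rw [Finset.sum_congr rfl (fun v _ => hreg v), Finset.sum_const, smul_eq_mul]

lemma eint_erase (S : Finset V) {v : V} (hv : v ∈ S) :
    (eint G S).card ≤ (eint G (S.erase v)).card + (G.neighborFinset v ∩ S).card := by
  classical
  rw [← Finset.card_filter_add_card_filter_not (s := eint G S) (p := fun e => v ∈ e)]
  have h1 : (eint G S).filter (fun e => ¬ v ∈ e) ⊆ eint G (S.erase v) := by
    intro e he
    rw [Finset.mem_filter, mem_eint] at he
    obtain ⟨⟨heE, heS⟩, hve⟩ := he
    rw [mem_eint]
    refine ⟨heE, fun x hx => Finset.mem_erase.mpr ⟨?_, heS x hx⟩⟩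
    rintro rfl; exact hve hx
  have h2 : ((eint G S).filter (fun e => v ∈ e)).card ≤ (G.neighborFinset v ∩ S).card := by
    apply Finset.card_le_card_of_injOn
      (fun e => if h : v ∈ e then Sym2.Mem.other h else v)
    · intro e he
      simp only [Finset.mem_coe] at he ⊢
      rw [Finset.mem_filter, mem_eint] at he
      obtain ⟨⟨heE, heS⟩, hve⟩ := he
      rw [dif_pos hve]
      have hspec := Sym2.other_spec hve
      rw [Finset.mem_inter, mem_neighborFinset]
      constructor
      · rw [← mem_edgeSet]; rw [hspec]; exact heE
      · exact heS _ (Sym2.other_mem hve)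
    · intro e₁ he₁ e₂ he₂ heq
      simp only [Finset.coe_filter, Set.mem_setOf_eq] at he₁ he₂
      simp only [dif_pos he₁.2, dif_pos he₂.2] at heq
      rw [← Sym2.other_spec he₁.2, ← Sym2.other_spec he₂.2, heq]
  have h1' := Finset.card_le_card h1
  omega

lemma path_len {S : Finset V} {u v : V} {p : G.Walk u v} (hp : p.IsPath)
    (hS : ∀ x ∈ p.support, x ∈ S) : p.length + 1 ≤ S.card := by
  classical
  have h1 : p.support.toFinset.card = p.length + 1 := by
    rw [List.toFinset_card_of_nodup hp.support_nodup, SimpleGraph.Walk.length_support]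
  have h2 : p.support.toFinset ⊆ S := fun x hx => hS x (List.mem_toFinset.mp hx)
  rw [← h1]
  exact Finset.card_le_card h2

lemma first_edge {u : V} : ∀ {v y : V} (q : G.Walk v y), q.IsPath → s(v, u) ∈ q.edges →
    u = q.getVert 1 := by
  intro v y q
  induction q with
  | nil => simp
  | @cons v x y h r ih =>
    intro hp he
    rw [SimpleGraph.Walk.edges_cons, List.mem_cons] at he
    rcases he with he | he
    · have : u = x := by
        rw [Sym2.eq_iff] at he
        rcases he with ⟨-, rfl⟩ | ⟨h1, rfl⟩
        · rfl
        · exact absurd h1 h.ne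
      rw [this, SimpleGraph.Walk.getVert_cons_succ, SimpleGraph.Walk.getVert_zero]
    · exfalso
      have hv : v ∈ r.support := r.fst_mem_support_of_mem_edges he
      rw [SimpleGraph.Walk.cons_isPath_iff] at hp
      exact hp.2 hv

lemma grow_path (S : Finset V) (hdeg : ∀ x ∈ S, 2 ≤ (G.neighborFinset x ∩ S).card) :
    ∀ (m : ℕ) {v u : V} (p : G.Walk v u), p.IsPath → (∀ x ∈ p.support, x ∈ S) →
      S.card ≤ p.length + m →
      ∃ (x : V) (w : G.Walk x x), w.IsCycle ∧ w.length ≤ S.card := by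
  intro m
  induction m with
  | zero =>
    intro v u p hp hs hm
    have := path_len hp hs
    omega
  | succ m ih =>
    intro v u p hp hs hm
    have hvS : v ∈ S := hs v p.start_mem_support
    have hN := hdeg v hvS
    by_cases hout : ∃ w ∈ G.neighborFinset v ∩ S, w ∉ p.support
    · obtain ⟨w, hw, hwp⟩ := hout
      rw [Finset.mem_inter, mem_neighborFinset] at hw
      have hadj : G.Adj w v := hw.1.symm
      apply ih (SimpleGraph.Walk.cons hadj p)
      · rw [SimpleGraph.Walk.cons_isPath_iff]; exact ⟨hp, hwp⟩
      · intro x hx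
        rw [SimpleGraph.Walk.support_cons, List.mem_cons] at hx
        rcases hx with rfl | hx
        · exact hw.2
        · exact hs x hx
      · rw [SimpleGraph.Walk.length_cons]; omega
    · push_neg at hout
      have hw' : ∃ w ∈ G.neighborFinset v ∩ S, w ≠ p.getVert 1 := by
        by_contra hcon
        push_neg at hcon
        have hsub : G.neighborFinset v ∩ S ⊆ {p.getVert 1} := by
          intro w hw; rw [Finset.mem_singleton]; exact hcon w hw
        have := Finset.card_le_card hsub
        rw [Finset.card_singleton] at this
        omega
      obtain ⟨w, hwN, hw1⟩ := hw'
      have hws : w ∈ p.support := hout w hwN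
      rw [Finset.mem_inter, mem_neighborFinset] at hwN
      have hadj : G.Adj v w := hwN.1
      set q := p.takeUntil w hws with hq_def
      have hq : q.IsPath := hp.takeUntil hws
      have hne : s(w, v) ∉ q.edges := by
        intro hmem
        rw [Sym2.eq_swap] at hmem
        have : s(v, w) ∈ p.edges := p.edges_takeUntil_subset hws hmem
        exact hw1 (first_edge p hp this)
      refine ⟨w, SimpleGraph.Walk.cons hadj.symm q, ?_, ?_⟩
      · rw [SimpleGraph.Walk.cons_isCycle_iff]
        exact ⟨hq, hne⟩
      · rw [SimpleGraph.Walk.length_cons]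
        have h1 : q.length ≤ p.length := p.length_takeUntil_le hws
        have h2 := path_len hp hs
        omega

lemma cyc_main : ∀ (n : ℕ) (S : Finset V), S.card = n → S.Nonempty →
    S.card ≤ (eint G S).card →
    ∃ (x : V) (w : G.Walk x x), w.IsCycle ∧ w.length ≤ S.card := by
  intro n
  induction n using Nat.strong_induction_on with
  | _ n ih =>
    intro S hcard hne hle
    by_cases hdeg : ∀ x ∈ S, 2 ≤ (G.neighborFinset x ∩ S).card
    · obtain ⟨x₀, hx₀⟩ := hne
      exact grow_path S hdeg S.card (SimpleGraph.Walk.nil (u := x₀))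
        SimpleGraph.Walk.IsPath.nil
        (by intro x hx; simp at hx; subst hx; exact hx₀)
        (by simp)
    · push_neg at hdeg
      obtain ⟨v, hvS, hvd⟩ := hdeg
      have hrem := eint_erase (G := G) S hvS
      rcases Finset.eq_empty_or_nonempty (S.erase v) with hS' | hS'
      · exfalso
        have hSv : S = {v} := by
          apply Finset.eq_singleton_iff_unique_mem.mpr
          refine ⟨hvS, fun x hx => ?_⟩
          by_contra hxv
          have : x ∈ S.erase v := Finset.mem_erase.mpr ⟨hxv, hx⟩
          rw [hS'] at this
          exact absurd this (Finset.notMem_empty x)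
        have h1 : 1 ≤ (eint G S).card := by rw [hSv] at hle ⊢; simpa using hle
        obtain ⟨e, he⟩ := Finset.card_pos.mp h1
        rw [mem_eint] at he
        obtain ⟨heE, heS⟩ := he
        induction e using Sym2.ind with
        | _ a b =>
          have ha : a = v := by
            have := heS a (by simp)
            rwa [hSv, Finset.mem_singleton] at this
          have hb : b = v := by
            have := heS b (by simp)
            rwa [hSv, Finset.mem_singleton] at this
          rw [ha, hb] at heE
          exact G.loopless.irrefl _ heE
      · have hless : (S.erase v).card < n := by
          rw [Finset.card_erase_of_mem hvS]
          have : 1 ≤ S.card := Finset.card_pos.mpr ⟨v, hvS⟩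
          omega
        have hle' : (S.erase v).card ≤ (eint G (S.erase v)).card := by
          rw [Finset.card_erase_of_mem hvS]
          omega
        obtain ⟨x, w, hw, hwl⟩ := ih _ hless (S.erase v) rfl hS' hle'
        refine ⟨x, w, hw, hwl.trans ?_⟩
        exact Finset.card_le_card (Finset.erase_subset v S)

lemma grow {α : ℕ} (hreg : G.IsRegularOfDegree α) :
    ∀ (j : ℕ) (S : Finset V), S.Nonempty → S.card + j ≤ α →
      ∃ T : Finset V, T.card = S.card + j ∧ (eint G S).card + j ≤ (eint G T).card := by
  intro j
  induction j with
  | zero => intro S _ _; exact ⟨S, by simp, by simp⟩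
  | succ j ih =>
    intro S hne hcard
    obtain ⟨v, hvS⟩ := hne
    have hw : ∃ w, G.Adj v w ∧ w ∉ S := by
      by_contra hcon
      push_neg at hcon
      have hsub : G.neighborFinset v ⊆ S := by
        intro w hw; exact hcon w (by rwa [mem_neighborFinset] at hw)
      have := Finset.card_le_card hsub
      rw [card_neighborFinset_eq_degree, hreg v] at this
      omega
    obtain ⟨w, hadj, hwS⟩ := hw
    have hcard1 : (insert w S).card = S.card + 1 := Finset.card_insert_of_notMem hwS
    have hmem : s(v, w) ∈ eint G (insert w S) := by
      rw [mem_eint]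
      refine ⟨hadj, fun x hx => ?_⟩
      rw [Sym2.mem_iff] at hx
      rcases hx with rfl | rfl
      · exact Finset.mem_insert_of_mem hvS
      · exact Finset.mem_insert_self _ _
    have hmono : eint G S ⊆ eint G (insert w S) := by
      intro e he
      rw [mem_eint] at he ⊢
      exact ⟨he.1, fun x hx => Finset.mem_insert_of_mem (he.2 x hx)⟩
    have hnot : s(v, w) ∉ eint G S := by
      rw [mem_eint]
      rintro ⟨-, h⟩
      exact hwS (h w (by simp))
    have hstep : (eint G S).card + 1 ≤ (eint G (insert w S)).card := by
      have hsub : insert s(v, w) (eint G S) ⊆ eint G (insert w S) := by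
        intro e he
        rcases Finset.mem_insert.mp he with rfl | he
        · exact hmem
        · exact hmono he
      have := Finset.card_le_card hsub
      rwa [Finset.card_insert_of_notMem hnot] at this
    obtain ⟨T, hT1, hT2⟩ := ih (insert w S) ⟨w, Finset.mem_insert_self _ _⟩ (by omega)
    exact ⟨T, by omega, by omega⟩

lemma end_mem_tail {a : V} (w : G.Walk a a) (hw : w.length ≠ 0) : a ∈ w.support.tail := by
  cases w with
  | nil => simp at hw
  | cons h r =>
    rw [SimpleGraph.Walk.support_cons, List.tail_cons]
    exact r.end_mem_support

end Aux

theorem stmt7 {V : Type*} [Fintype V] [Nonempty V] (G : SimpleGraph V) [DecidableRel G.Adj]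
    (α k : ℕ) (hreg : G.IsRegularOfDegree α) (hk1 : 1 ≤ k) (hk : k ≤ α) :
    ((k : ℕ∞) + 1 ≤ G.egirth) ↔ fileSize G k = k * α - (k - 1) := by
  classical
  have hα1 : 1 ≤ α := le_trans hk1 hk
  have hkα : k ≤ k * α := Nat.le_mul_of_pos_right k (by omega)
  obtain ⟨x₀⟩ := ‹Nonempty V›
  obtain ⟨T₀, hT₀card, hT₀int⟩ := grow (G := G) hreg (k - 1) {x₀}
    (Finset.singleton_nonempty x₀) (by rw [Finset.card_singleton]; omega)
  rw [Finset.card_singleton] at hT₀card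
  have hT₀k : T₀.card = k := by omega
  constructor
  · intro hgirth
    have bound : ∀ S : Finset V, S.card = k → (eint G S).card ≤ k - 1 := by
      intro S hS
      by_contra hcon
      have hSne : S.Nonempty := Finset.card_pos.mp (by omega)
      obtain ⟨x, w, hw, hwl⟩ := cyc_main (G := G) S.card S rfl hSne (by omega)
      have h1 : (k : ℕ∞) + 1 ≤ (w.length : ℕ∞) := le_egirth.mp hgirth x w hw
      have h2 : k + 1 ≤ w.length := by exact_mod_cast h1
      rw [hS] at hwl
      omega
    have hT₀ge : k - 1 ≤ (eint G T₀).card := by omega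
    have hT₀eq := le_antisymm (bound T₀ hT₀k) hT₀ge
    have hkey := key_count (G := G) hreg T₀
    rw [hT₀k] at hkey
    have hval : incidentEdgeCount G T₀ = k * α - (k - 1) := by omega
    rw [fileSize]
    apply le_antisymm
    · exact Nat.sInf_le ⟨T₀, hT₀k, hval.symm⟩
    · refine le_csInf ⟨incidentEdgeCount G T₀, T₀, hT₀k, rfl⟩ ?_
      rintro m ⟨S, hS, rfl⟩
      have hkey2 := key_count (G := G) hreg S
      rw [hS] at hkey2
      have := bound S hS
      omega
  · intro hfs
    by_contra hgirth
    have hac : ¬G.IsAcyclic := by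
      intro hA
      exact hgirth (by rw [hA.egirth_eq_top]; exact le_top)
    obtain ⟨a, w, hw, hlen⟩ := (exists_egirth_eq_length (G := G)).mpr hac
    have hgk : w.length ≤ k := by
      have h1 := not_le.mp hgirth
      rw [hlen] at h1
      have h2 : (w.length : ℕ∞) < ((k + 1 : ℕ) : ℕ∞) := by push_cast; exact h1
      have h3 : w.length < k + 1 := by exact_mod_cast h2
      omega
    have hg3 : 3 ≤ w.length := hw.three_le_length
    set S₀ := w.support.tail.toFinset with hS₀
    have hS₀card : S₀.card = w.length := by
      rw [hS₀, List.toFinset_card_of_nodup hw.support_nodup, List.length_tail,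
        SimpleGraph.Walk.length_support]
      omega
    have htail : a ∈ w.support.tail := end_mem_tail w (by omega)
    have hsub : w.edges.toFinset ⊆ eint G S₀ := by
      intro e he
      rw [List.mem_toFinset] at he
      induction e using Sym2.ind with
      | _ c d =>
        rw [mem_eint]
        refine ⟨w.edges_subset_edgeSet he, fun x hx => ?_⟩
        rw [Sym2.mem_iff] at hx
        have hxs : x ∈ w.support := by
          rcases hx with rfl | rfl
          · exact w.fst_mem_support_of_mem_edges he
          · exact w.snd_mem_support_of_mem_edges he
        rw [hS₀, List.mem_toFinset]
        rw [w.support_eq_cons, List.mem_cons] at hxs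
        rcases hxs with rfl | hxs
        · exact htail
        · exact hxs
    have hS₀int : w.length ≤ (eint G S₀).card := by
      have h1 : w.edges.toFinset.card = w.length := by
        rw [List.toFinset_card_of_nodup hw.isCircuit.isTrail.edges_nodup, w.length_edges]
      rw [← h1]
      exact Finset.card_le_card hsub
    have hS₀ne : S₀.Nonempty := Finset.card_pos.mp (by omega)
    obtain ⟨T, hTcard, hTint⟩ := grow (G := G) hreg (k - w.length) S₀ hS₀ne (by omega)
    have hTk : T.card = k := by omega
    have hTge : k ≤ (eint G T).card := by omega
    have hkey := key_count (G := G) hreg T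
    rw [hTk] at hkey
    have hmem : incidentEdgeCount G T ∈
        {m | ∃ S : Finset V, S.card = k ∧ m = incidentEdgeCount G S} := ⟨T, hTk, rfl⟩
    have hle := Nat.sInf_le hmem
    rw [fileSize] at hfs
    omega
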